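/- Algebraic Poincaré lemma in form degree 0 (Theorem 6.1, part H^0(d) ≅ ℝ): if f ∈ R satisfies D_i f = 0 for every i ∈ Fin n, then f is a constant polynomial, i.e. f lies in the image of the constant embedding C : k → R. -/

import Mathlib

open MvPolynomial

/-- Coefficient formula for `pderiv`. -/
lemma coeff_pderiv_aux {σ : Type*} {k : Type*} [CommSemiring k] (p : σ) (m : σ →₀ ℕ)
    (f : MvPolynomial σ k) :
    coeff m (pderiv p f) = (m p + 1 : ℕ) * coeff (m + Finsupp.single p 1) f := by
  classical
  induction f using MvPolynomial.induction_on' with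
  | add f g hf hg => simp [coeff_add, hf, hg, mul_add]
  | monomial s a =>
    rw [pderiv_monomial, coeff_monomial, coeff_monomial]
    by_cases h : s = m + Finsupp.single p 1
    · subst h
      have h1 : m + Finsupp.single p 1 - Finsupp.single p 1 = m := by
        simp
      have h2 : (m + Finsupp.single p 1 : σ →₀ ℕ) p = m p + 1 := by
        simp
      rw [if_pos h1, h2]
      simp only [if_true]
      push_cast
      ring
    · rw [if_neg h]
      split_ifs with h2
      · have hsp : s p = 0 := by
          by_contra hsp
          apply h
          have hle : Finsupp.single p 1 ≤ s := by
            rw [Finsupp.single_le_iff]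
            omega
          rw [← h2, tsub_add_cancel_of_le hle]
        simp [hsp]
      · simp

/-- In characteristic zero, a polynomial really depending on a variable has
nonzero partial derivative with respect to it. -/
lemma pderiv_ne_zero_of_mem_vars {σ : Type*} {k : Type*} [Field k] [CharZero k]
    {p : σ} {f : MvPolynomial σ k} (hp : p ∈ f.vars) :
    pderiv p f ≠ 0 := by
  classical
  obtain ⟨d, hd, hdp⟩ := (mem_vars p).mp hp
  have hdp' : d p ≠ 0 := Finsupp.mem_support_iff.mp hdp
  intro h0
  have hco := coeff_pderiv_aux p (d - Finsupp.single p 1) f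
  have hle : Finsupp.single p 1 ≤ d := by
    rw [Finsupp.single_le_iff]; omega
  rw [tsub_add_cancel_of_le hle, h0] at hco
  have hcd : coeff d f ≠ 0 := MvPolynomial.mem_support_iff.mp hd
  have : (((d - Finsupp.single p 1 : σ →₀ ℕ) p + 1 : ℕ) : k) * coeff d f ≠ 0 := by
    refine mul_ne_zero ?_ hcd
    push_cast
    exact Nat.cast_add_one_ne_zero _
  rw [← hco] at this
  simp at this

/-- The jet-space total derivative `D_i`: the unique `k`-derivation of the jet
polynomial ring with `D_i X(φ, J) = X(φ, J + e_i)`. -/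
noncomputable def totalDeriv (k : Type) [CommRing k] (Φ : Type) (n : ℕ) (i : Fin n) :
    Derivation k (MvPolynomial (Φ × (Fin n →₀ ℕ)) k) (MvPolynomial (Φ × (Fin n →₀ ℕ)) k) :=
  mkDerivation k (fun p : Φ × (Fin n →₀ ℕ) => X (p.1, p.2 + Finsupp.single i 1))

lemma totalDeriv_X (k : Type) [CommRing k] (Φ : Type) (n : ℕ) (i : Fin n)
    (p : Φ × (Fin n →₀ ℕ)) :
    totalDeriv k Φ n i (X p) = X (p.1, p.2 + Finsupp.single i 1) :=
  mkDerivation_X _ _ _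

/-- The shift map on variables is injective. -/
lemma shift_injective {Φ : Type} {n : ℕ} (i : Fin n) :
    Function.Injective
      (fun p : Φ × (Fin n →₀ ℕ) => (p.1, p.2 + Finsupp.single i 1)) := by
  intro p q h
  obtain ⟨h1, h2⟩ := Prod.mk.injEq _ _ _ _ ▸ h
  exact Prod.ext h1 (add_right_cancel h2)

/-- Commutator identity: `⁅∂_{σ p}, D_i⁆ = ∂_p`. -/
lemma pderiv_comm_totalDeriv (k : Type) [Field k] (Φ : Type) (n : ℕ) (i : Fin n)
    (p : Φ × (Fin n →₀ ℕ)) :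
    ⁅pderiv (R := k) (p.1, p.2 + Finsupp.single i 1), totalDeriv k Φ n i⁆ = pderiv p := by
  classical
  apply derivation_ext
  intro q
  rw [Derivation.commutator_apply, totalDeriv_X]
  have h2 : totalDeriv k Φ n i (pderiv (R := k)
      (p.1, p.2 + Finsupp.single i 1) (X q)) = 0 := by
    by_cases hq : q = (p.1, p.2 + Finsupp.single i 1)
    · subst hq; rw [pderiv_X_self]; simp
    · rw [pderiv_X_of_ne hq]; simp
  rw [h2, sub_zero]
  by_cases hq : q = p
  · subst hq; rw [pderiv_X_self, pderiv_X_self]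
  · rw [pderiv_X_of_ne hq, pderiv_X_of_ne
      (fun h => hq (shift_injective i h))]

/-- Algebraic Poincaré lemma in form degree 0: a local function annihilated by all
total derivatives `D_i` is a constant. -/
theorem algebraic_poincare_degree_zero
    (k : Type) [Field k] [CharZero k] (Φ : Type) [Nonempty Φ] (n : ℕ) (hn : 1 ≤ n)
    (f : MvPolynomial (Φ × (Fin n →₀ ℕ)) k)
    (hf : ∀ i : Fin n, totalDeriv k Φ n i f = 0) :
    ∃ c : k, f = C c := by
  classical
  have hvars : f.vars = ∅ := by
    by_contra hne
    obtain ⟨p, hp, hmax⟩ := Finset.exists_max_image f.vars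
      (fun q => q.2 ⟨0, hn⟩) (Finset.nonempty_iff_ne_empty.mpr hne)
    set i : Fin n := ⟨0, hn⟩
    set sp : Φ × (Fin n →₀ ℕ) := (p.1, p.2 + Finsupp.single i 1) with hsp
    have hspn : sp ∉ f.vars := by
      intro hmem
      have := hmax sp hmem
      have : p.2 i + 1 ≤ p.2 i := by
        simpa [hsp, Finsupp.add_apply, Finsupp.single_eq_same] using this
      omega
    have hz : pderiv (R := k) sp f = 0 := pderiv_eq_zero_of_notMem_vars hspn
    have hcomm := congrArg (fun D : Derivation k _ _ => D f)
      (pderiv_comm_totalDeriv k Φ n i p)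
    simp only [Derivation.commutator_apply] at hcomm
    rw [hf i, hz, map_zero, map_zero, sub_zero] at hcomm
    exact pderiv_ne_zero_of_mem_vars hp hcomm.symm
  refine ⟨coeff 0 f, ?_⟩
  ext m
  by_cases hm : m = 0
  · subst hm; simp
  · rw [coeff_C, if_neg (fun h => hm h.symm)]
    by_contra hc
    obtain ⟨q, hq⟩ := Finsupp.support_nonempty_iff.mpr hm
    have : q ∈ f.vars := (mem_vars q).mpr ⟨m, MvPolynomial.mem_support_iff.mpr hc, hq⟩
    rw [hvars] at this
    simp at this
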